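/- Let A be a balanced allocation that is an optimal solution of the LP maximizing ∑_i ∑_j α_i v_{ij} x_{ij} over balanced fractional allocations, and let (q, p) ∈ ℝ^N × ℝ^M be an optimal dual solution with q_i ≥ 0 for all i. If A is p-EF1 (i.e., p(A_i) ≥ p(A_{i'}) − max_{j∈A_{i'}} p_j for all agents i, i'), then A is EF1. -/

import Mathlib

open Finset

def IsBalanced (n m k : ℕ) (A : Fin n → Finset (Fin m)) : Prop :=
  (∀ j : Fin m, ∃! i : Fin n, j ∈ A i) ∧ ∀ i : Fin n, (A i).card = k

def IsFracBalanced (n m k : ℕ) (x : Fin n → Fin m → ℝ) : Prop :=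
  (∀ i j, 0 ≤ x i j) ∧ (∀ i : Fin n, ∑ j : Fin m, x i j = (k : ℝ)) ∧
    (∀ j : Fin m, ∑ i : Fin n, x i j = 1)

/-- EF1: each agent prefers their own bundle after removing one good from
any other agent's (nonempty) bundle. -/
def IsEF1 (n m : ℕ) (v : Fin n → Fin m → ℝ) (A : Fin n → Finset (Fin m)) : Prop :=
  ∀ i i' : Fin n, A i' = ∅ ∨
    ∃ j ∈ A i', ∑ j' ∈ (A i').erase j, v i j' ≤ ∑ j' ∈ A i, v i j'

/-- If a balanced allocation `A` is optimal for the weighted-welfare LP,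
`(q, p)` is an optimal dual solution with `q ≥ 0`, and `A` is `p`-EF1,
then `A` is EF1. -/
theorem stmt2 (n m k : ℕ) (hm : m = n * k)
    (v : Fin n → Fin m → ℝ) (hv : ∀ i j, 0 ≤ v i j)
    (α : Fin n → ℝ) (hα : ∀ i, 0 < α i)
    (A : Fin n → Finset (Fin m)) (hA : IsBalanced n m k A)
    (hopt : ∀ x : Fin n → Fin m → ℝ, IsFracBalanced n m k x →
      ∑ i : Fin n, ∑ j : Fin m, α i * v i j * x i j ≤
        ∑ i : Fin n, α i * ∑ j ∈ A i, v i j)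
    (q : Fin n → ℝ) (p : Fin m → ℝ)
    (hq : ∀ i, 0 ≤ q i)
    (hfeas : ∀ i j, α i * v i j ≤ q i + p j)
    (hdualopt : (k : ℝ) * ∑ i : Fin n, q i + ∑ j : Fin m, p j =
      ∑ i : Fin n, α i * ∑ j ∈ A i, v i j)
    (hpEF1 : ∀ (i i' : Fin n) (h : (A i').Nonempty),
      (∑ j ∈ A i', p j) - (A i').sup' h p ≤ ∑ j ∈ A i, p j) :
    IsEF1 n m v A := by
  obtain ⟨huniq, hcard⟩ := hA
  -- the bundles partition the goods
  have hdisj : ((Finset.univ : Finset (Fin n)) : Set (Fin n)).PairwiseDisjoint A := by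
    intro a _ b _ hab
    simp only [Finset.disjoint_left]
    intro j hja hjb
    exact hab ((huniq j).unique hja hjb)
  have hcover : Finset.univ.biUnion A = (Finset.univ : Finset (Fin m)) := by
    ext j
    simp only [Finset.mem_biUnion, Finset.mem_univ, true_and, iff_true]
    exact ⟨(huniq j).exists.choose, (huniq j).exists.choose_spec⟩
  have hsum_p : ∑ i : Fin n, ∑ j ∈ A i, p j = ∑ j : Fin m, p j := by
    rw [← hcover, Finset.sum_biUnion hdisj]
  -- expand the dual objective
  have hinner : ∀ i : Fin n, ∑ j ∈ A i, (q i + p j)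
      = (k : ℝ) * q i + ∑ j ∈ A i, p j := by
    intro i
    rw [Finset.sum_add_distrib, Finset.sum_const, hcard i, nsmul_eq_mul]
  have expand : ∑ i : Fin n, ∑ j ∈ A i, (q i + p j)
      = (k : ℝ) * ∑ i : Fin n, q i + ∑ j : Fin m, p j := by
    rw [← hsum_p, Finset.mul_sum, ← Finset.sum_add_distrib]
    exact Finset.sum_congr rfl fun i _ => hinner i
  -- complementary slackness
  have key : ∑ i : Fin n, ∑ j ∈ A i, (q i + p j - α i * v i j) = 0 := by
    have : ∑ i : Fin n, ∑ j ∈ A i, (α i * v i j)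
        = ∑ i : Fin n, α i * ∑ j ∈ A i, v i j := by
      exact Finset.sum_congr rfl fun i _ => (Finset.mul_sum _ _ _).symm
    simp only [Finset.sum_sub_distrib]
    rw [expand, this, hdualopt, sub_self]
  have cs : ∀ i : Fin n, ∀ j ∈ A i, q i + p j = α i * v i j := by
    have h1 := (Finset.sum_eq_zero_iff_of_nonneg (fun i _ =>
      Finset.sum_nonneg fun j _ => sub_nonneg.mpr (hfeas i j))).mp key
    intro i j hj
    have h2 := (Finset.sum_eq_zero_iff_of_nonneg (fun j _ =>
      sub_nonneg.mpr (hfeas i j))).mp (h1 i (Finset.mem_univ i)) j hj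
    linarith
  -- value of each bundle under the owner's (and any agent's) weighted valuation
  have hbundle : ∀ i : Fin n, α i * ∑ j ∈ A i, v i j
      = (k : ℝ) * q i + ∑ j ∈ A i, p j := by
    intro i
    rw [Finset.mul_sum, ← hinner i]
    exact Finset.sum_congr rfl fun j hj => (cs i j hj).symm
  intro i i'
  rcases Finset.eq_empty_or_nonempty (A i') with he | h
  · exact Or.inl he
  right
  obtain ⟨j, hj, hjsup⟩ := Finset.exists_mem_eq_sup' h p
  refine ⟨j, hj, ?_⟩
  rw [← mul_le_mul_iff_right₀ (hα i), Finset.mul_sum, Finset.mul_sum]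
  calc ∑ j' ∈ (A i').erase j, α i * v i j'
      ≤ ∑ j' ∈ (A i').erase j, (q i + p j') :=
        Finset.sum_le_sum fun j' _ => hfeas i j'
    _ = ((A i').erase j).card * q i + ∑ j' ∈ (A i').erase j, p j' := by
        rw [Finset.sum_add_distrib, Finset.sum_const, nsmul_eq_mul]
    _ ≤ (k : ℝ) * q i + ∑ j' ∈ A i, p j' := by
        have h1 : (((A i').erase j).card : ℝ) ≤ (k : ℝ) := by
          have := Finset.card_le_card (Finset.erase_subset j (A i'))
          rw [hcard i'] at this
          exact_mod_cast this
        have h2 : ∑ j' ∈ (A i').erase j, p j' = (∑ j' ∈ A i', p j') - p j := by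
          have := Finset.add_sum_erase (A i') p hj
          linarith
        have h3 := hpEF1 i i' h
        rw [hjsup] at h3
        have h4 := mul_le_mul_of_nonneg_right h1 (hq i)
        linarith [h2, h3]
    _ = ∑ j' ∈ A i, α i * v i j' := by
        rw [← Finset.mul_sum, hbundle i]
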